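/- Let γ > 0 and let ψ ∈ L²(ℝ, ℂ) be such that x ↦ x·ψ(x) is also in L²(ℝ, ℂ). Then for every z ∈ ℂ, (γ²/(2√2))·(d/dz)(𝔅_γψ)(z) + √2·z·𝔅_γψ(z) = 𝔅_γ[x ↦ x·ψ(x)](z); that is, the position operator X(ψ)(x) = x·ψ(x) is intertwined by 𝔅_γ with the operator (γ²/(2√2))·d/dz + √2·M_z on the RBF space. -/

import Mathlib

open MeasureTheory Complex

/-- The RBF Segal–Bargmann transform
`𝔅_γψ(z) = (2/(πγ²))^{1/4} ∫_ℝ exp(−(x − √2 z)²/γ²) ψ(x) dx`. -/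
noncomputable def rbfSB (γ : ℝ) (ψ : ℝ → ℂ) (z : ℂ) : ℂ :=
  (((2 / (Real.pi * γ ^ 2)) ^ ((1 : ℝ) / 4) : ℝ) : ℂ) *
    ∫ x : ℝ, Complex.exp (-((x : ℂ) - (Real.sqrt 2 : ℂ) * z) ^ 2 / (γ : ℂ) ^ 2) * ψ x

lemma norm_kernel (γ s : ℝ) (x : ℝ) (z : ℂ) :
    ‖Complex.exp (-((x : ℂ) - (s : ℂ) * z) ^ 2 / (γ : ℂ) ^ 2)‖
      = Real.exp ((s ^ 2 * z.im ^ 2 - (x - s * z.re) ^ 2) / γ ^ 2) := by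
  rw [Complex.norm_exp]
  congr 1
  simp [Complex.div_re, Complex.normSq_apply, Complex.mul_re, Complex.mul_im, Complex.ofReal_re,
    Complex.ofReal_im, pow_two]
  by_cases hγ : γ = 0
  · simp [hγ]
  · field_simp

lemma poly_gauss_integrable {b : ℝ} (hb : 0 < b) (c C : ℝ) (hC : 0 ≤ C) :
    Integrable (fun x : ℝ => (|x| + C) ^ 2 * Real.exp (-b * (x - c) ^ 2)) := by
  have hpow : Integrable (fun u : ℝ => u ^ 2 * Real.exp (-b * u ^ 2)) := by
    have h := integrable_rpow_mul_exp_neg_mul_sq hb (s := 2) (by norm_num)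
    refine h.congr ?_
    filter_upwards with u
    congr 1
    rw [show ((2:ℝ)) = ((2:ℕ) : ℝ) by norm_num, Real.rpow_natCast]
  have hexp : Integrable (fun u : ℝ => Real.exp (-b * u ^ 2)) := integrable_exp_neg_mul_sq hb
  set d := |c| + C with hd
  have hg : Integrable (fun u : ℝ => 2 * (u ^ 2 * Real.exp (-b * u ^ 2)) +
      2 * d ^ 2 * Real.exp (-b * u ^ 2)) := (hpow.const_mul 2).add (hexp.const_mul (2 * d ^ 2))
  have key : Integrable (fun u : ℝ => (|u + c| + C) ^ 2 * Real.exp (-b * u ^ 2)) := by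
    refine hg.mono' ?_ ?_
    · exact ((((_root_.continuous_abs.comp (continuous_id.add continuous_const)).add
        continuous_const).pow 2).mul (by continuity)).aestronglyMeasurable
    · filter_upwards with u
      have h1 : (0:ℝ) ≤ (|u + c| + C) ^ 2 * Real.exp (-b * u ^ 2) := by positivity
      rw [Real.norm_of_nonneg h1]
      have h2 : |u + c| ≤ |u| + |c| := abs_add_le u c
      have h3 : (|u + c| + C) ^ 2 ≤ 2 * u ^ 2 + 2 * d ^ 2 := by
        have h4 : (0:ℝ) ≤ |u + c| + C := by positivity
        have h5 : |u + c| + C ≤ |u| + d := by rw [hd]; linarith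
        nlinarith [h5, h4, sq_nonneg (|u| - d), _root_.sq_abs u]
      nlinarith [Real.exp_pos (-b * u ^ 2)]
  have := key.comp_add_right (-c)
  refine this.congr ?_
  filter_upwards with x
  rw [show x + -c + c = x by ring, show -b * (x + -c) ^ 2 = -b * (x - c) ^ 2 by ring]

lemma poly_gauss_memL2 {b : ℝ} (hb : 0 < b) (c C : ℝ) (hC : 0 ≤ C) :
    MemLp (fun x : ℝ => (|x| + C) * Real.exp (-b * (x - c) ^ 2)) 2 volume := by
  rw [memLp_two_iff_integrable_sq (by
    exact ((_root_.continuous_abs.add continuous_const).mul (by continuity)).aestronglyMeasurable)]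
  have := poly_gauss_integrable (b := 2 * b) (by linarith) c C hC
  refine this.congr ?_
  filter_upwards with x
  rw [mul_pow, ← Real.exp_nat_mul]
  ring_nf

lemma gauss_memL2 {b : ℝ} (hb : 0 < b) (c : ℝ) :
    MemLp (fun x : ℝ => Real.exp (-b * (x - c) ^ 2)) 2 volume := by
  refine MemLp.of_le (poly_gauss_memL2 hb c 1 zero_le_one)
    (Continuous.aestronglyMeasurable (by continuity)) ?_
  filter_upwards with x
  have h1 : (0:ℝ) ≤ (|x| + 1) * Real.exp (-b * (x - c) ^ 2) := by positivity
  rw [Real.norm_of_nonneg (Real.exp_pos _).le, Real.norm_of_nonneg h1]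
  nlinarith [Real.exp_pos (-b * (x - c) ^ 2), abs_nonneg x]

lemma memL2_mul_integrable {𝕜 : Type*} [RCLike 𝕜] {φ ψ : ℝ → 𝕜}
    (hφ : MemLp φ 2 volume) (hψ : MemLp ψ 2 volume) :
    Integrable (fun x => φ x * ψ x) volume := by
  rw [← memLp_one_iff_integrable]
  have h := MemLp.smul (p := 2) (q := 2) (r := 1) hψ hφ
  exact h

lemma kernel_memL2 {γ : ℝ} (hγ : 0 < γ) (z : ℂ) :
    MemLp (fun x : ℝ =>
      Complex.exp (-((x : ℂ) - (Real.sqrt 2 : ℂ) * z) ^ 2 / (γ : ℂ) ^ 2)) 2 volume := by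
  have hb : (0:ℝ) < 1 / γ ^ 2 := by positivity
  have hg := (gauss_memL2 hb (Real.sqrt 2 * z.re)).const_mul
    (Real.exp (Real.sqrt 2 ^ 2 * z.im ^ 2 / γ ^ 2))
  refine MemLp.of_le hg (Continuous.aestronglyMeasurable (by fun_prop)) ?_
  filter_upwards with x
  rw [norm_kernel]
  have h1 : (0:ℝ) ≤ Real.exp (Real.sqrt 2 ^ 2 * z.im ^ 2 / γ ^ 2) *
      Real.exp (-(1 / γ ^ 2) * (x - Real.sqrt 2 * z.re) ^ 2) := by positivity
  rw [Real.norm_of_nonneg h1, ← Real.exp_add]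
  apply Real.exp_le_exp.mpr
  apply le_of_eq
  field_simp
  ring

set_option maxHeartbeats 1000000 in
theorem rbfSB_position_operator (γ : ℝ) (hγ : 0 < γ) (ψ : ℝ → ℂ)
    (hψ : MemLp ψ 2 volume)
    (hxψ : MemLp (fun x : ℝ => (x : ℂ) * ψ x) 2 volume) :
    ∀ z : ℂ,
      ((γ : ℂ) ^ 2 / (2 * (Real.sqrt 2 : ℂ))) * deriv (rbfSB γ ψ) z +
          (Real.sqrt 2 : ℂ) * z * rbfSB γ ψ z =
        rbfSB γ (fun x => (x : ℂ) * ψ x) z := by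
  intro z₀
  set s : ℝ := Real.sqrt 2 with hs
  have hs0 : 0 < s := Real.sqrt_pos.mpr (by norm_num)
  have hsC : ((s : ℂ)) ≠ 0 := Complex.ofReal_ne_zero.mpr hs0.ne'
  have hγC : ((γ : ℂ)) ≠ 0 := Complex.ofReal_ne_zero.mpr hγ.ne'
  set c : ℂ := (((2 / (Real.pi * γ ^ 2)) ^ ((1 : ℝ) / 4) : ℝ) : ℂ) with hc
  set F : ℂ → ℝ → ℂ := fun z x =>
    Complex.exp (-((x : ℂ) - (s : ℂ) * z) ^ 2 / (γ : ℂ) ^ 2) * ψ x with hF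
  set F' : ℂ → ℝ → ℂ := fun z x =>
    (2 * (s : ℂ) * ((x : ℂ) - (s : ℂ) * z) / (γ : ℂ) ^ 2) *
      Complex.exp (-((x : ℂ) - (s : ℂ) * z) ^ 2 / (γ : ℂ) ^ 2) * ψ x with hF'
  -- integrability of F z for every z
  have hFint : ∀ z : ℂ, Integrable (F z) volume := fun z =>
    memL2_mul_integrable (kernel_memL2 hγ z) hψ
  -- constants for the bound
  set M : ℝ := s * (‖z₀‖ + 1) with hM
  set C₁ : ℝ := Real.exp ((2 * (|z₀.im| + 1) ^ 2 + 2) / γ ^ 2) with hC₁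
  set bound : ℝ → ℝ := fun x => ((2 * s / γ ^ 2) * C₁) *
    ((|x| + M) * Real.exp (-(1 / (2 * γ ^ 2)) * (x - s * z₀.re) ^ 2) * ‖ψ x‖) with hbound
  have hγ2 : (0:ℝ) < γ ^ 2 := by positivity
  have hbound_int : Integrable bound volume := by
    have hG : MemLp (fun x : ℝ =>
        (|x| + M) * Real.exp (-(1 / (2 * γ ^ 2)) * (x - s * z₀.re) ^ 2)) 2 volume :=
      poly_gauss_memL2 (by positivity) _ M (by positivity)
    have := memL2_mul_integrable hG hψ.norm
    exact this.const_mul _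
  have key := hasDerivAt_integral_of_dominated_loc_of_deriv_le (μ := volume)
      (F := F) (F' := F') (x₀ := z₀) (bound := bound) (Metric.ball_mem_nhds z₀ one_pos)
      (Filter.Eventually.of_forall fun z =>
        (Continuous.aestronglyMeasurable (by fun_prop)).mul hψ.1)
      (hFint z₀)
      ((Continuous.aestronglyMeasurable (by fun_prop)).mul hψ.1)
      ?_ hbound_int ?_
  · obtain ⟨hF'int, hderiv⟩ := key
    have hrb : HasDerivAt (rbfSB γ ψ) (c * ∫ x, F' z₀ x) z₀ := by
      have h := hderiv.const_mul c
      exact h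
    rw [hrb.deriv]
    have hpt : ∀ x : ℝ, ((γ:ℂ)^2 / (2 * (s:ℂ))) * F' z₀ x + ((s:ℂ) * z₀) * F z₀ x =
        Complex.exp (-((x : ℂ) - (s : ℂ) * z₀) ^ 2 / (γ : ℂ) ^ 2) * ((x:ℂ) * ψ x) := by
      intro x
      simp only [hF, hF']
      field_simp
      ring
    have hA : rbfSB γ ψ z₀ = c * ∫ x : ℝ, F z₀ x := rfl
    have hB : rbfSB γ (fun x => (x:ℂ) * ψ x) z₀ =
        c * ∫ x : ℝ, Complex.exp (-((x : ℂ) - (s : ℂ) * z₀) ^ 2 / (γ : ℂ) ^ 2) * ((x:ℂ) * ψ x) :=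
      rfl
    rw [hA, hB]
    have hAB : ((γ:ℂ)^2 / (2 * (s:ℂ))) * (∫ x : ℝ, F' z₀ x) + ((s:ℂ) * z₀) * (∫ x : ℝ, F z₀ x)
        = ∫ x : ℝ, Complex.exp (-((x : ℂ) - (s : ℂ) * z₀) ^ 2 / (γ : ℂ) ^ 2) * ((x:ℂ) * ψ x) := by
      rw [← integral_const_mul, ← integral_const_mul,
        ← integral_add (hF'int.const_mul _) ((hFint z₀).const_mul _)]
      exact integral_congr_ae (Filter.Eventually.of_forall hpt)
    rw [← hAB]
    ring
  · -- the bound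
    refine Filter.Eventually.of_forall fun x => fun z hz => ?_
    have hzn : ‖z - z₀‖ < 1 := mem_ball_iff_norm.mp hz
    have hre : |z.re - z₀.re| < 1 := by
      have h := Complex.abs_re_le_norm (z - z₀)
      rw [Complex.sub_re] at h
      linarith
    have him : |z.im - z₀.im| < 1 := by
      have h := Complex.abs_im_le_norm (z - z₀)
      rw [Complex.sub_im] at h
      linarith
    have hs2 : s ^ 2 = 2 := Real.sq_sqrt (by norm_num)
    have hw : ‖(x:ℂ) - (s:ℂ) * z‖ ≤ |x| + M := by
      have h1 : ‖(x:ℂ) - (s:ℂ) * z‖ ≤ ‖(x:ℂ)‖ + ‖(s:ℂ) * z‖ := norm_sub_le _ _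
      have h2 : ‖(x:ℂ)‖ = |x| := by rw [Complex.norm_real, Real.norm_eq_abs]
      have h3 : ‖(s:ℂ) * z‖ = s * ‖z‖ := by
        rw [norm_mul, Complex.norm_real, Real.norm_eq_abs, abs_of_pos hs0]
      have h4 : ‖z‖ ≤ ‖z₀‖ + 1 := by
        have := norm_sub_norm_le z z₀
        linarith
      have h5 : s * ‖z‖ ≤ M := by
        rw [hM]
        exact mul_le_mul_of_nonneg_left h4 hs0.le
      rw [h2, h3] at h1
      linarith
    have hexp : ‖Complex.exp (-((x:ℂ) - (s:ℂ) * z) ^ 2 / (γ:ℂ) ^ 2)‖ ≤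
        C₁ * Real.exp (-(1 / (2 * γ ^ 2)) * (x - s * z₀.re) ^ 2) := by
      rw [norm_kernel γ s x z, hC₁, ← Real.exp_add]
      apply Real.exp_le_exp.mpr
      have him2 : z.im ^ 2 ≤ (|z₀.im| + 1) ^ 2 := by
        have h6 := abs_sub_abs_le_abs_sub z.im z₀.im
        nlinarith [abs_nonneg z.im, abs_nonneg z₀.im, _root_.sq_abs z.im]
      have hd2 : (z.re - z₀.re) ^ 2 ≤ 1 := by
        nlinarith [abs_nonneg (z.re - z₀.re), _root_.sq_abs (z.re - z₀.re)]
      have him2' : s ^ 2 * z.im ^ 2 ≤ 2 * (|z₀.im| + 1) ^ 2 := by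
        rw [hs2]; nlinarith [him2]
      have hv2 : s ^ 2 * (z.re - z₀.re) ^ 2 ≤ 2 := by rw [hs2]; nlinarith [hd2]
      have hkey : s ^ 2 * z.im ^ 2 - (x - s * z.re) ^ 2 ≤
          (2 * (|z₀.im| + 1) ^ 2 + 2) - (x - s * z₀.re) ^ 2 / 2 := by
        nlinarith [sq_nonneg ((x - s * z₀.re) - 2 * (s * (z.re - z₀.re))), him2', hv2]
      have hdiv : (s ^ 2 * z.im ^ 2 - (x - s * z.re) ^ 2) / γ ^ 2 ≤
          ((2 * (|z₀.im| + 1) ^ 2 + 2) - (x - s * z₀.re) ^ 2 / 2) / γ ^ 2 :=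
        div_le_div_of_nonneg_right hkey hγ2.le
      refine hdiv.trans (le_of_eq ?_)
      field_simp
      ring
    have hnorm : ‖F' z x‖ = (2 * s * ‖(x:ℂ) - (s:ℂ) * z‖ / γ ^ 2) *
        ‖Complex.exp (-((x:ℂ) - (s:ℂ) * z) ^ 2 / (γ:ℂ) ^ 2)‖ * ‖ψ x‖ := by
      simp only [hF', norm_mul, norm_div]
      congr 2
      norm_num [Complex.norm_real, Real.norm_eq_abs, abs_of_pos hs0, norm_pow, _root_.sq_abs]
    rw [hnorm, hbound]
    have h0 : (0:ℝ) ≤ 2 * s / γ ^ 2 := by positivity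
    calc (2 * s * ‖(x:ℂ) - (s:ℂ) * z‖ / γ ^ 2) *
        ‖Complex.exp (-((x:ℂ) - (s:ℂ) * z) ^ 2 / (γ:ℂ) ^ 2)‖ * ‖ψ x‖
        ≤ (2 * s * (|x| + M) / γ ^ 2) *
          (C₁ * Real.exp (-(1 / (2 * γ ^ 2)) * (x - s * z₀.re) ^ 2)) * ‖ψ x‖ := by
          gcongr
      _ = 2 * s / γ ^ 2 * C₁ *
          ((|x| + M) * Real.exp (-(1 / (2 * γ ^ 2)) * (x - s * z₀.re) ^ 2) * ‖ψ x‖) := by ring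
  · -- differentiability
    refine Filter.Eventually.of_forall fun x => fun z hz => ?_
    have h1 : HasDerivAt (fun z : ℂ => (x:ℂ) - (s:ℂ) * z) (-(s:ℂ)) z := by
      simpa using (((hasDerivAt_id z).const_mul ((s:ℂ))).const_sub ((x:ℂ)))
    have h2 := h1.pow 2
    have h3 := (h2.neg).div_const ((γ:ℂ)^2)
    have h4 := h3.cexp
    have h5 := h4.mul_const (ψ x)
    refine h5.congr_deriv ?_
    simp only [hF', Pi.pow_apply, Pi.neg_apply]
    push_cast
    ring
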